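/- Every real solution of the Brown almost-linear system in dimension n is of the form (α, α, ..., α, α^{1-n}) where α is a real root of the polynomial n·a^n − (n+1)·a^{n-1} + 1 = 0; conversely, for any such nonzero root α, the point (α,...,α,α^{1-n}) solves the system. -/

import Mathlib

/-- The Brown almost-linear system in dimension `n`: the first `n-1` equations are
`x i + (∑ j, x j) - (n + 1) = 0`, and the last equation is `(∏ j, x j) - 1 = 0`. -/
def BrownSol (n : ℕ) (x : Fin n → ℝ) : Prop :=
  (∀ i : Fin n, (i : ℕ) < n - 1 → x i + (∑ j, x j) - (n + 1) = 0) ∧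
  (∏ j, x j) - 1 = 0

/-- The candidate point `(α, ..., α, α^(1-n))` (with `α^(1-n) = (α^(n-1))⁻¹`). -/
noncomputable def BrownPoint (n : ℕ) (α : ℝ) : Fin n → ℝ :=
  fun i => if (i : ℕ) < n - 1 then α else (α ^ (n - 1))⁻¹

lemma brown_sum (m : ℕ) (α : ℝ) :
    ∑ j : Fin (m+1), BrownPoint (m+1) α j = m * α + (α ^ m)⁻¹ := by
  rw [Fin.sum_univ_castSucc]
  have h1 : ∀ j : Fin m, BrownPoint (m+1) α j.castSucc = α := fun j => by
    simp [BrownPoint, j.isLt]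
  have h2 : BrownPoint (m+1) α (Fin.last m) = (α ^ m)⁻¹ := by
    simp [BrownPoint]
  simp [h1, h2, Finset.sum_const, mul_comm]

lemma brown_prod (m : ℕ) (α : ℝ) :
    ∏ j : Fin (m+1), BrownPoint (m+1) α j = α ^ m * (α ^ m)⁻¹ := by
  rw [Fin.prod_univ_castSucc]
  have h1 : ∀ j : Fin m, BrownPoint (m+1) α j.castSucc = α := fun j => by
    simp [BrownPoint, j.isLt]
  have h2 : BrownPoint (m+1) α (Fin.last m) = (α ^ m)⁻¹ := by
    simp [BrownPoint]
  simp [h1, h2, Finset.prod_const]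

theorem stmt_0 (n : ℕ) (hn : 2 ≤ n) :
    (∀ x : Fin n → ℝ, BrownSol n x →
      ∃ α : ℝ, α ≠ 0 ∧ (n : ℝ) * α ^ n - (n + 1) * α ^ (n - 1) + 1 = 0 ∧
        x = BrownPoint n α) ∧
    (∀ α : ℝ, α ≠ 0 → (n : ℝ) * α ^ n - (n + 1) * α ^ (n - 1) + 1 = 0 →
      BrownSol n (BrownPoint n α)) := by
  obtain ⟨m, rfl⟩ : ∃ m, n = m + 1 := ⟨n - 1, by omega⟩
  have hm : 1 ≤ m := by omega
  constructor
  · rintro x ⟨h1, h2⟩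
    set α := x ⟨0, by omega⟩ with hαdef
    have hx : ∀ i : Fin (m+1), (i : ℕ) < m → x i = α := by
      intro i hi
      have e1 := h1 i (by simpa using hi)
      have e2 := h1 ⟨0, by omega⟩ (by simp; omega)
      rw [← hαdef] at e2
      linarith
    have hprod : ∏ j, x j = α ^ m * x (Fin.last m) := by
      rw [Fin.prod_univ_castSucc]
      congr 1
      rw [Finset.prod_congr rfl (fun j _ => hx j.castSucc j.isLt)]
      simp
    have hαne : α ≠ 0 := by
      intro h
      rw [hprod, h, zero_pow (by omega), zero_mul] at h2
      norm_num at h2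
    have hpow : α ^ m ≠ 0 := pow_ne_zero _ hαne
    have hlast : x (Fin.last m) = (α ^ m)⁻¹ := by
      rw [hprod] at h2
      field_simp at h2 ⊢
      linarith
    have hxeq : x = BrownPoint (m+1) α := by
      funext i
      by_cases hi : (i : ℕ) < m
      · rw [hx i hi]; simp [BrownPoint, hi]
      · have : i = Fin.last m := by
          have := i.isLt
          ext
          simp only [Fin.val_last]
          omega
        subst this
        simp [BrownPoint, hlast]
    refine ⟨α, hαne, ?_, hxeq⟩
    have e2 := h1 ⟨0, by omega⟩ (by simp; omega)
    rw [← hαdef, hxeq, brown_sum] at e2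
    have hsub : m + 1 - 1 = m := by omega
    rw [hsub, pow_succ]
    field_simp at e2 ⊢
    push_cast at e2 ⊢
    ring_nf at e2 ⊢
    linarith
  · intro α hα hroot
    have hpow : α ^ m ≠ 0 := pow_ne_zero _ hα
    have hsub : m + 1 - 1 = m := by omega
    rw [hsub, pow_succ] at hroot
    constructor
    · intro i hi
      have hi' : (i : ℕ) < m := by simpa using hi
      have : BrownPoint (m+1) α i = α := by simp [BrownPoint, hi']
      rw [this, brown_sum]
      field_simp at hroot ⊢
      push_cast at hroot ⊢
      ring_nf at hroot ⊢
      linarith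
    · rw [brown_prod]
      field_simp
      norm_num
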